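/- Let k ≥ 0 and 0 ≤ q ≤ 1 with either k > 0 or q < 1. Then there exists a constant C = C(k,q) > 0 such that for all β > 0 and all x ≥ 0 one has (x²+1)^{k/2} · ∫_x^∞ (y²+1)^{-(k+q)/2} e^{β(x-y)} dy ≤ C β^{q-1}. -/

import Mathlib

open MeasureTheory

private lemma shift_pre (x : ℝ) : (fun y : ℝ => y - x) ⁻¹' (Set.Ioi 0) = Set.Ioi x := by
  ext y; simp [sub_pos]

private lemma shift_integral (F : ℝ → ℝ) (x : ℝ) :
    ∫ y in Set.Ioi x, F (y - x) = ∫ t in Set.Ioi 0, F t := by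
  have h := (measurePreserving_sub_right (volume : Measure ℝ) x).setIntegral_preimage_emb
      (MeasurableEquiv.subRight x).measurableEmbedding F (Set.Ioi 0)
  rwa [shift_pre] at h

private lemma shift_integrableOn {F : ℝ → ℝ} (x : ℝ) (h : IntegrableOn F (Set.Ioi 0)) :
    IntegrableOn (fun y => F (y - x)) (Set.Ioi x) := by
  have h2 := ((measurePreserving_sub_right (volume : Measure ℝ) x).integrableOn_comp_preimage
      (MeasurableEquiv.subRight x).measurableEmbedding (f := F) (s := Set.Ioi 0)).mpr h
  rwa [shift_pre] at h2

/-- Lemma C.1 (i): weighted exponential integral estimate on `[x, ∞)`. -/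
theorem stmt_0 (k q : ℝ) (hk : 0 ≤ k) (hq0 : 0 ≤ q) (hq1 : q ≤ 1)
    (hkq : 0 < k ∨ q < 1) :
    ∃ C : ℝ, 0 < C ∧ ∀ β : ℝ, 0 < β → ∀ x : ℝ, 0 ≤ x →
      (x ^ 2 + 1) ^ (k / 2) *
        (∫ y in Set.Ioi x, (y ^ 2 + 1) ^ (-(k + q) / 2) * Real.exp (β * (x - y)))
      ≤ C * β ^ (q - 1) := by
  by_cases hq : q < 1
  · -- Case A : q < 1
    refine ⟨Real.Gamma (1 - q), Real.Gamma_pos_of_pos (by linarith), ?_⟩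
    intro β hβ x hx
    set F : ℝ → ℝ := fun t => t ^ (-q) * Real.exp (-(β * t)) with hF
    have hFint : IntegrableOn F (Set.Ioi 0) := by
      have := integrableOn_rpow_mul_exp_neg_mul_rpow
        (show (-1:ℝ) < -q by linarith) (zero_lt_one) hβ
      simpa [hF, Real.rpow_one, neg_mul] using this
    have hGint : IntegrableOn (fun y => F (y - x)) (Set.Ioi x) := shift_integrableOn x hFint
    have hP : (0:ℝ) < x ^ 2 + 1 := by positivity
    rw [← integral_const_mul]
    have hmono : (∫ y in Set.Ioi x,
        (x ^ 2 + 1) ^ (k / 2) * ((y ^ 2 + 1) ^ (-(k + q) / 2) * Real.exp (β * (x - y))))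
        ≤ ∫ y in Set.Ioi x, F (y - x) := by
      refine integral_mono_of_nonneg ?_ hGint ?_
      · filter_upwards with y
        positivity
      · filter_upwards [ae_restrict_mem measurableSet_Ioi] with y hy
        have hxy : x < y := hy
        have hQ : (0:ℝ) < y ^ 2 + 1 := by positivity
        have ht : (0:ℝ) < y - x := sub_pos.mpr hxy
        have hy0 : (0:ℝ) < y := lt_of_le_of_lt hx hxy
        have hexp : Real.exp (β * (x - y)) = Real.exp (-(β * (y - x))) := by ring_nf
        have key : (x ^ 2 + 1) ^ (k / 2) * (y ^ 2 + 1) ^ (-(k + q) / 2) ≤ (y - x) ^ (-q) := by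
          have hPQ : x ^ 2 + 1 ≤ y ^ 2 + 1 := by nlinarith
          have h1 : (x ^ 2 + 1) ^ (k / 2) ≤ (y ^ 2 + 1) ^ (k / 2) :=
            Real.rpow_le_rpow hP.le hPQ (by positivity)
          have hsplit : (y ^ 2 + 1) ^ (-(k + q) / 2)
              = (y ^ 2 + 1) ^ (-(k / 2)) * (y ^ 2 + 1) ^ (-(q / 2)) := by
            rw [← Real.rpow_add hQ]
            ring_nf
          have h2 : (y - x) ^ 2 ≤ y ^ 2 + 1 := by nlinarith
          have h3 : (y ^ 2 + 1) ^ (-(q / 2)) ≤ ((y - x) ^ 2) ^ (-(q / 2)) :=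
            Real.rpow_le_rpow_of_nonpos (by positivity) h2 (by linarith)
          have h4 : ((y - x) ^ 2) ^ (-(q / 2)) = (y - x) ^ (-q) := by
            rw [← Real.rpow_natCast (y - x) 2, ← Real.rpow_mul ht.le]
            norm_num
            congr 1; ring
          have h5 : (x ^ 2 + 1) ^ (k / 2) * (y ^ 2 + 1) ^ (-(k / 2)) ≤ 1 := by
            rw [Real.rpow_neg hQ.le, ← div_eq_mul_inv, div_le_one (by positivity)]
            exact h1
          calc (x ^ 2 + 1) ^ (k / 2) * (y ^ 2 + 1) ^ (-(k + q) / 2)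
              = ((x ^ 2 + 1) ^ (k / 2) * (y ^ 2 + 1) ^ (-(k / 2))) * (y ^ 2 + 1) ^ (-(q / 2)) := by
                rw [hsplit]; ring
            _ ≤ 1 * ((y - x) ^ 2) ^ (-(q / 2)) :=
                mul_le_mul h5 h3 (by positivity) zero_le_one
            _ = (y - x) ^ (-q) := by rw [one_mul, h4]
        show (x ^ 2 + 1) ^ (k / 2) * ((y ^ 2 + 1) ^ (-(k + q) / 2) * Real.exp (β * (x - y)))
            ≤ (y - x) ^ (-q) * Real.exp (-(β * (y - x)))
        rw [hexp, ← mul_assoc]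
        exact mul_le_mul_of_nonneg_right key (Real.exp_nonneg _)
    have hval : ∫ t in Set.Ioi 0, F t = Real.Gamma (1 - q) * β ^ (q - 1) := by
      have h := Real.integral_rpow_mul_exp_neg_mul_Ioi (show (0:ℝ) < 1 - q by linarith) hβ
      have he : (1:ℝ) - q - 1 = -q := by ring
      rw [he] at h
      have hpow : (1 / β) ^ (1 - q) = β ^ (q - 1) := by
        rw [one_div, Real.inv_rpow hβ.le, ← Real.rpow_neg hβ.le]
        congr 1; ring
      rw [hF]
      rw [h, hpow, mul_comm]
    calc (∫ y in Set.Ioi x,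
        (x ^ 2 + 1) ^ (k / 2) * ((y ^ 2 + 1) ^ (-(k + q) / 2) * Real.exp (β * (x - y))))
        ≤ ∫ y in Set.Ioi x, F (y - x) := hmono
      _ = ∫ t in Set.Ioi 0, F t := shift_integral F x
      _ = Real.Gamma (1 - q) * β ^ (q - 1) := hval
  · -- Case B : q = 1, k > 0
    have hq' : q = 1 := le_antisymm hq1 (not_lt.mp hq)
    subst hq'
    have hk0 : 0 < k := by
      rcases hkq with h | h
      · exact h
      · linarith
    set J : ℝ := ∫ s in Set.Ioi (0:ℝ), ((1:ℝ) + s ^ 2) ^ (-(k + 1) / 2) with hJdef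
    have hJint : IntegrableOn (fun s : ℝ => ((1:ℝ) + s ^ 2) ^ (-(k + 1) / 2)) (Set.Ioi 0) := by
      have h := integrable_rpow_neg_one_add_norm_sq (E := ℝ) (μ := volume)
        (r := k + 1) (by simp; linarith)
      have h2 : (fun s : ℝ => ((1:ℝ) + s ^ 2) ^ (-(k + 1) / 2))
          = fun s : ℝ => ((1:ℝ) + ‖s‖ ^ 2) ^ (-(k + 1) / 2) := by
        funext s; rw [Real.norm_eq_abs, sq_abs]
      rw [h2]
      have h3 : -(k + 1) / 2 = (-(k + 1)) / 2 := by ring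
      rw [h3]
      exact h.integrableOn
    have hJ0 : 0 ≤ J := by
      rw [hJdef]
      exact setIntegral_nonneg measurableSet_Ioi (fun s _ => by positivity)
    refine ⟨(2:ℝ) ^ ((k + 1) / 2) * (J + 1), by positivity, ?_⟩
    intro β hβ x hx
    have hP : (0:ℝ) < x ^ 2 + 1 := by positivity
    set A : ℝ := Real.sqrt (x ^ 2 + 1) with hAdef
    have hA : 0 < A := Real.sqrt_pos.mpr hP
    have hA2 : A ^ 2 = x ^ 2 + 1 := Real.sq_sqrt hP.le
    have hA' : A = (x ^ 2 + 1) ^ ((1:ℝ) / 2) := Real.sqrt_eq_rpow _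
    set G : ℝ → ℝ := fun t => ((x ^ 2 + 1) + t ^ 2) ^ (-(k + 1) / 2) with hG
    have hGcont : Continuous G := by
      apply Continuous.rpow_const (by continuity)
      intro t; left; positivity
    have hGint : IntegrableOn G (Set.Ioi 0) := by
      refine hJint.mono' hGcont.aestronglyMeasurable ?_
      filter_upwards with t
      rw [Real.norm_eq_abs, abs_of_pos (by positivity)]
      exact Real.rpow_le_rpow_of_nonpos (by positivity) (by nlinarith) (by linarith)
    have hGval : ∫ t in Set.Ioi 0, G t
        = A * ((x ^ 2 + 1) ^ (-(k + 1) / 2) * J) := by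
      have h := MeasureTheory.integral_comp_mul_left_Ioi G 0 hA
      simp only [mul_zero, smul_eq_mul] at h
      have h2 : ∀ s ∈ Set.Ioi (0:ℝ),
          G (A * s) = (x ^ 2 + 1) ^ (-(k + 1) / 2) * ((1:ℝ) + s ^ 2) ^ (-(k + 1) / 2) := by
        intro s _
        show ((x ^ 2 + 1) + (A * s) ^ 2) ^ (-(k + 1) / 2) = _
        rw [mul_pow, hA2, show x ^ 2 + 1 + (x ^ 2 + 1) * s ^ 2 = (x ^ 2 + 1) * (1 + s ^ 2) by ring,
          Real.mul_rpow hP.le (by positivity)]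
      rw [setIntegral_congr_fun measurableSet_Ioi h2, integral_const_mul] at h
      rw [← hJdef] at h
      rw [h, ← mul_assoc, mul_inv_cancel₀ hA.ne', one_mul]
    have hq10 : (1:ℝ) - 1 = 0 := by norm_num
    rw [hq10, Real.rpow_zero, mul_one]
    rw [← integral_const_mul]
    set c0 : ℝ := (x ^ 2 + 1) ^ (k / 2) * (2:ℝ) ^ ((k + 1) / 2) with hc0
    have hmono : (∫ y in Set.Ioi x,
        (x ^ 2 + 1) ^ (k / 2) * ((y ^ 2 + 1) ^ (-(k + 1) / 2) * Real.exp (β * (x - y))))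
        ≤ ∫ y in Set.Ioi x, c0 * G (y - x) := by
      refine integral_mono_of_nonneg ?_ ((shift_integrableOn x hGint).const_mul c0) ?_
      · filter_upwards with y
        positivity
      · filter_upwards [ae_restrict_mem measurableSet_Ioi] with y hy
        have hxy : x < y := hy
        have hQ : (0:ℝ) < y ^ 2 + 1 := by positivity
        have hb : (x ^ 2 + 1) + (y - x) ^ 2 ≤ 2 * (y ^ 2 + 1) := by
          nlinarith [mul_nonneg hx (sub_pos.mpr hxy).le]
        have h5 : (2 * (y ^ 2 + 1)) ^ (-(k + 1) / 2) ≤ G (y - x) :=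
          Real.rpow_le_rpow_of_nonpos (by positivity) hb (by linarith)
        have h6 : (y ^ 2 + 1) ^ (-(k + 1) / 2)
            = (2:ℝ) ^ ((k + 1) / 2) * (2 * (y ^ 2 + 1)) ^ (-(k + 1) / 2) := by
          rw [Real.mul_rpow (by norm_num) hQ.le, ← mul_assoc, ← Real.rpow_add two_pos,
            show (k + 1) / 2 + -(k + 1) / 2 = 0 by ring, Real.rpow_zero, one_mul]
        have hexp : Real.exp (β * (x - y)) ≤ 1 := by
          rw [Real.exp_le_one_iff]
          exact mul_nonpos_of_nonneg_of_nonpos hβ.le (by linarith)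
        have key : (y ^ 2 + 1) ^ (-(k + 1) / 2) * Real.exp (β * (x - y))
            ≤ (2:ℝ) ^ ((k + 1) / 2) * G (y - x) := by
          calc (y ^ 2 + 1) ^ (-(k + 1) / 2) * Real.exp (β * (x - y))
              ≤ (y ^ 2 + 1) ^ (-(k + 1) / 2) * 1 :=
                mul_le_mul_of_nonneg_left hexp (by positivity)
            _ = (2:ℝ) ^ ((k + 1) / 2) * (2 * (y ^ 2 + 1)) ^ (-(k + 1) / 2) := by
                rw [mul_one, h6]
            _ ≤ (2:ℝ) ^ ((k + 1) / 2) * G (y - x) :=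
                mul_le_mul_of_nonneg_left h5 (by positivity)
        show (x ^ 2 + 1) ^ (k / 2) * ((y ^ 2 + 1) ^ (-(k + 1) / 2) * Real.exp (β * (x - y)))
            ≤ c0 * G (y - x)
        rw [hc0, mul_assoc]
        exact mul_le_mul_of_nonneg_left key (by positivity)
    have hval : ∫ y in Set.Ioi x, c0 * G (y - x)
        = (2:ℝ) ^ ((k + 1) / 2) * J := by
      rw [integral_const_mul, shift_integral G x, hGval, hc0]
      have hone : (x ^ 2 + 1) ^ (k / 2) * A * (x ^ 2 + 1) ^ (-(k + 1) / 2) = 1 := by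
        rw [hA', ← Real.rpow_add hP, ← Real.rpow_add hP,
          show k / 2 + 1 / 2 + -(k + 1) / 2 = 0 by ring, Real.rpow_zero]
      calc (x ^ 2 + 1) ^ (k / 2) * (2:ℝ) ^ ((k + 1) / 2)
            * (A * ((x ^ 2 + 1) ^ (-(k + 1) / 2) * J))
          = (2:ℝ) ^ ((k + 1) / 2) * J
            * ((x ^ 2 + 1) ^ (k / 2) * A * (x ^ 2 + 1) ^ (-(k + 1) / 2)) := by ring
        _ = (2:ℝ) ^ ((k + 1) / 2) * J := by rw [hone, mul_one]
    calc (∫ y in Set.Ioi x,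
        (x ^ 2 + 1) ^ (k / 2) * ((y ^ 2 + 1) ^ (-(k + 1) / 2) * Real.exp (β * (x - y))))
        ≤ ∫ y in Set.Ioi x, c0 * G (y - x) := hmono
      _ = (2:ℝ) ^ ((k + 1) / 2) * J := hval
      _ ≤ (2:ℝ) ^ ((k + 1) / 2) * (J + 1) :=
          mul_le_mul_of_nonneg_left (by linarith) (by positivity)
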